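/- Let n₁ ≥ n₂ be natural numbers and m₁, m₂₁ natural numbers with m₁ + m₂₁ ≤ n₁ and m₂₁ ≤ n₂. Let F₁ be an invertible m₁ × m₁ matrix and F₂₁ an invertible m₂₁ × m₂₁ matrix over 𝔽₂, and define the n₁ × m₁ matrix G₁ = [0^{(n₁ − m₁ − m₂₁) × m₁}; F₁; 0^{m₂₁ × m₁}] and the n₁ × m₂₁ matrix G₂₁ = [0^{(n₂ − m₂₁) × m₂₁}; F₂₁; 0^{(n₁ − n₂) × m₂₁}]. Then, with S the n₁ × n₁ down-shift matrix, rank([G₁ | S^{n₁ − n₂} G₂₁]) − rank(S^{n₁ − n₂} G₂₁) = m₁ and rank([G₁ | S^{n₁ − n₂} G₂₁]) − rank(G₁) = m₂₁; i.e., under treating-interference-as-noise each of the two users of the deterministic multiple access channel achieves exactly its designed number of bits m₁ and m₂₁, respectively. -/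

import Mathlib

open Matrix

noncomputable section

/-- The `q × q` down-shift matrix over `𝔽₂`: `S i j = 1` iff `i = j + 1`. -/
def shiftMatrix (q : ℕ) : Matrix (Fin q) (Fin q) (ZMod 2) :=
  Matrix.of fun i j => if (i : ℕ) = (j : ℕ) + 1 then 1 else 0

/-- The `q × mm` vertical block matrix whose rows `off, …, off + mm - 1` form `F`
and whose other rows are zero. -/
def blockAt (q mm off : ℕ) (F : Matrix (Fin mm) (Fin mm) (ZMod 2)) :
    Matrix (Fin q) (Fin mm) (ZMod 2) :=
  Matrix.of fun i j =>
    if h : off ≤ (i : ℕ) ∧ (i : ℕ) < off + mm then F ⟨(i : ℕ) - off, by omega⟩ j else 0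

lemma shift_mul_apply {q mm : ℕ} (M : Matrix (Fin q) (Fin mm) (ZMod 2)) (i : Fin q) (j : Fin mm) :
    (shiftMatrix q * M) i j = if h : 1 ≤ (i : ℕ) then M ⟨(i : ℕ) - 1, by omega⟩ j else 0 := by
  rw [Matrix.mul_apply]
  split
  · next h =>
    rw [Finset.sum_eq_single (⟨(i : ℕ) - 1, by omega⟩ : Fin q)]
    · simp only [shiftMatrix, Matrix.of_apply]
      rw [if_pos (show (i : ℕ) = (i : ℕ) - 1 + 1 by omega), one_mul]
    · intro b _ hb
      simp only [shiftMatrix, Matrix.of_apply]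
      rw [if_neg, zero_mul]
      intro hc
      exact hb (Fin.ext (show (b : ℕ) = (i : ℕ) - 1 by omega))
    · simp
  · next h =>
    apply Finset.sum_eq_zero
    intro k _
    simp only [shiftMatrix, Matrix.of_apply]
    rw [if_neg (by omega), zero_mul]

lemma shift_blockAt {q mm off : ℕ} (h : off + mm + 1 ≤ q)
    (F : Matrix (Fin mm) (Fin mm) (ZMod 2)) :
    shiftMatrix q * blockAt q mm off F = blockAt q mm (off + 1) F := by
  ext i j
  rw [shift_mul_apply]
  simp only [blockAt, Matrix.of_apply]
  by_cases h1 : 1 ≤ (i : ℕ)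
  · rw [dif_pos h1]
    by_cases h2 : off ≤ (i : ℕ) - 1 ∧ (i : ℕ) - 1 < off + mm
    · rw [dif_pos h2, dif_pos (by omega)]
      congr 1
      exact Fin.ext (show (i : ℕ) - 1 - off = (i : ℕ) - (off + 1) by omega)
    · rw [dif_neg h2, dif_neg (by omega)]
  · rw [dif_neg h1, dif_neg (by omega)]

lemma shiftPow_blockAt {q mm off : ℕ} (r : ℕ) (h : off + mm + r ≤ q)
    (F : Matrix (Fin mm) (Fin mm) (ZMod 2)) :
    shiftMatrix q ^ r * blockAt q mm off F = blockAt q mm (off + r) F := by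
  induction r with
  | zero => simp
  | succ k ih =>
    rw [pow_succ', Matrix.mul_assoc, ih (by omega), shift_blockAt (by omega), add_assoc]

lemma blockAt_apply_in {q mm off : ℕ} (F : Matrix (Fin mm) (Fin mm) (ZMod 2))
    (j : Fin mm) (k : Fin mm) (h : off + mm ≤ q) :
    blockAt q mm off F ⟨off + (j : ℕ), by omega⟩ k = F j k := by
  simp only [blockAt, Matrix.of_apply]
  rw [dif_pos ⟨by omega, by omega⟩]
  congr 1
  exact Fin.ext (show off + (j : ℕ) - off = (j : ℕ) by omega)

lemma blockAt_mulVec_at {q mm off : ℕ} (h : off + mm ≤ q)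
    (F : Matrix (Fin mm) (Fin mm) (ZMod 2)) (x : Fin mm → ZMod 2) (j : Fin mm) :
    (blockAt q mm off F).mulVec x ⟨off + (j : ℕ), by omega⟩ = F.mulVec x j := by
  unfold Matrix.mulVec
  simp only [dotProduct]
  apply Finset.sum_congr rfl
  intro k _
  rw [blockAt_apply_in F j k h]

lemma blockAt_mulVec_outside {q mm off : ℕ}
    (F : Matrix (Fin mm) (Fin mm) (ZMod 2)) (x : Fin mm → ZMod 2) (i : Fin q)
    (h : (i : ℕ) < off ∨ off + mm ≤ (i : ℕ)) :
    (blockAt q mm off F).mulVec x i = 0 := by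
  unfold Matrix.mulVec
  simp only [dotProduct]
  apply Finset.sum_eq_zero
  intro k _
  have : blockAt q mm off F i k = 0 := by
    simp only [blockAt, Matrix.of_apply]
    rw [dif_neg (by omega)]
  rw [this, zero_mul]

lemma rank_of_mulVec_inj {m n : Type*} [Fintype m] [Fintype n]
    (M : Matrix m n (ZMod 2)) (h : Function.Injective M.mulVec) :
    M.rank = Fintype.card n := by
  have h' : Function.Injective M.mulVecLin := by
    rwa [Matrix.coe_mulVecLin]
  rw [Matrix.rank, LinearMap.finrank_range_of_inj h', Module.finrank_fintype_fun_eq_card]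

lemma rank_blockAt {q mm off : ℕ} (h : off + mm ≤ q)
    (F : Matrix (Fin mm) (Fin mm) (ZMod 2)) (hF : IsUnit F) :
    (blockAt q mm off F).rank = mm := by
  rw [rank_of_mulVec_inj, Fintype.card_fin]
  intro x y hxy
  apply Matrix.mulVec_injective_iff_isUnit.2 hF
  ext j
  have := congrFun hxy (⟨off + (j : ℕ), by omega⟩ : Fin q)
  rwa [blockAt_mulVec_at h, blockAt_mulVec_at h] at this

lemma rank_two_blocks {q m₁ m₂ a b : ℕ} (hab : a + m₁ ≤ b) (hb : b + m₂ ≤ q)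
    (F₁ : Matrix (Fin m₁) (Fin m₁) (ZMod 2)) (F₂ : Matrix (Fin m₂) (Fin m₂) (ZMod 2))
    (hF₁ : IsUnit F₁) (hF₂ : IsUnit F₂) :
    (Matrix.fromCols (blockAt q m₁ a F₁) (blockAt q m₂ b F₂)).rank = m₁ + m₂ := by
  rw [rank_of_mulVec_inj]
  · simp
  have hinj : Function.Injective
      (Matrix.fromCols (blockAt q m₁ a F₁) (blockAt q m₂ b F₂)).mulVecLin := by
    rw [← LinearMap.ker_eq_bot, LinearMap.ker_eq_bot']
    intro v hv
    have hv' : blockAt q m₁ a F₁ *ᵥ (v ∘ Sum.inl) + blockAt q m₂ b F₂ *ᵥ (v ∘ Sum.inr) = 0 := by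
      rw [← Matrix.fromCols_mulVec_sumElim, Sum.elim_comp_inl_inr]
      exact hv
    have hx : v ∘ Sum.inl = 0 := by
      apply Matrix.mulVec_injective_iff_isUnit.2 hF₁
      rw [Matrix.mulVec_zero]
      ext j
      have h1 := congrFun hv' (⟨a + (j : ℕ), by omega⟩ : Fin q)
      rw [Pi.add_apply, blockAt_mulVec_at (by omega),
        blockAt_mulVec_outside _ _ _ (by left; simp only [Fin.val_mk]; omega), add_zero] at h1
      simpa using h1
    have hy : v ∘ Sum.inr = 0 := by
      apply Matrix.mulVec_injective_iff_isUnit.2 hF₂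
      rw [Matrix.mulVec_zero]
      ext j
      have h1 := congrFun hv' (⟨b + (j : ℕ), by omega⟩ : Fin q)
      rw [Pi.add_apply, blockAt_mulVec_at hb,
        blockAt_mulVec_outside _ _ _ (by right; simp only [Fin.val_mk]; omega), zero_add] at h1
      simpa using h1
    funext i
    cases i with
    | inl j => exact congrFun hx j
    | inr j => exact congrFun hy j
  rwa [Matrix.coe_mulVecLin] at hinj

/-- Under TIN, each of the two users of the deterministic MAC achieves exactly its
designed number of bits `m₁` and `m₂₁`. -/
theorem tin_rates_two_user (n₁ n₂ m₁ m₂₁ : ℕ) (hn : n₂ ≤ n₁)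
    (hm₁ : m₁ + m₂₁ ≤ n₁) (hm₂ : m₂₁ ≤ n₂)
    (F₁ : Matrix (Fin m₁) (Fin m₁) (ZMod 2))
    (F₂₁ : Matrix (Fin m₂₁) (Fin m₂₁) (ZMod 2))
    (hF₁ : IsUnit F₁) (hF₂₁ : IsUnit F₂₁) :
    (Matrix.fromCols
        (blockAt n₁ m₁ (n₁ - m₁ - m₂₁) F₁)
        (shiftMatrix n₁ ^ (n₁ - n₂) * blockAt n₁ m₂₁ (n₂ - m₂₁) F₂₁)).rank
        - (shiftMatrix n₁ ^ (n₁ - n₂) * blockAt n₁ m₂₁ (n₂ - m₂₁) F₂₁).rank = m₁ ∧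
    (Matrix.fromCols
        (blockAt n₁ m₁ (n₁ - m₁ - m₂₁) F₁)
        (shiftMatrix n₁ ^ (n₁ - n₂) * blockAt n₁ m₂₁ (n₂ - m₂₁) F₂₁)).rank
        - (blockAt n₁ m₁ (n₁ - m₁ - m₂₁) F₁).rank = m₂₁ := by
  have hs : shiftMatrix n₁ ^ (n₁ - n₂) * blockAt n₁ m₂₁ (n₂ - m₂₁) F₂₁
      = blockAt n₁ m₂₁ (n₁ - m₂₁) F₂₁ := by
    rw [shiftPow_blockAt (n₁ - n₂) (by omega),
      show n₂ - m₂₁ + (n₁ - n₂) = n₁ - m₂₁ by omega]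
  rw [hs]
  rw [rank_two_blocks (by omega) (by omega) _ _ hF₁ hF₂₁,
    rank_blockAt (by omega) _ hF₁, rank_blockAt (by omega) _ hF₂₁]
  omega

end
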